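/- For B_n = C_2 ≀ S_n: Σ_{σ ∈ B_n} q_1^{flag-major(σ)} q_2^{flag-major(σ^{-1})} = Σ_{σ ∈ B_n} q_1^{2·maj(σ) + k(σ)} q_2^{2·maj(σ^{-1}) + k(σ)}, where k(σ) is the number of negative entries of the signed permutation σ and maj is computed with respect to the order -1 < -2 < ... < -n < 1 < 2 < ... < n; in particular k(σ) = k(σ^{-1}). -/

import Mathlib

open Finset

@[ext]
structure GenPerm (m n : ℕ) where
  σ : Equiv.Perm (Fin n)
  c : Fin n → ZMod m
deriving DecidableEq

namespace GenPerm

variable {m n : ℕ}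

instance [NeZero m] : Fintype (GenPerm m n) :=
  Fintype.ofEquiv (Equiv.Perm (Fin n) × (Fin n → ZMod m))
    { toFun := fun p => ⟨p.1, p.2⟩
      invFun := fun g => (g.σ, g.c)
      left_inv := fun p => rfl
      right_inv := fun g => rfl }

instance : Mul (GenPerm m n) := ⟨fun g h => ⟨g.σ * h.σ, fun j => g.c (h.σ j) + h.c j⟩⟩
instance : One (GenPerm m n) := ⟨⟨1, 0⟩⟩
instance : Inv (GenPerm m n) := ⟨fun g => ⟨g.σ⁻¹, fun j => - g.c (g.σ⁻¹ j)⟩⟩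

@[simp] lemma mul_σ (g h : GenPerm m n) : (g * h).σ = g.σ * h.σ := rfl
@[simp] lemma mul_c (g h : GenPerm m n) (j : Fin n) : (g * h).c j = g.c (h.σ j) + h.c j := rfl
@[simp] lemma one_σ : (1 : GenPerm m n).σ = 1 := rfl
@[simp] lemma one_c (j : Fin n) : (1 : GenPerm m n).c j = 0 := rfl
@[simp] lemma inv_σ (g : GenPerm m n) : (g⁻¹).σ = g.σ⁻¹ := rfl
@[simp] lemma inv_c (g : GenPerm m n) (j : Fin n) : (g⁻¹).c j = - g.c (g.σ⁻¹ j) := rfl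

instance : Group (GenPerm m n) where
  mul_assoc a b c := by
    ext j
    · simp [mul_assoc]
    · simp [add_assoc]
  one_mul a := by
    ext j
    · simp
    · simp
  mul_one a := by
    ext j
    · simp
    · simp
  inv_mul_cancel a := by
    ext j
    · simp
    · simp

/-- The generator `s i`: `s 0` multiplies the first letter's phase by `ω`;
for `1 ≤ i < n`, `s i` swaps positions `i` and `i+1` (1-indexed), i.e. `i-1` and `i`
(0-indexed). -/
def s (i : ℕ) : GenPerm m n :=
  if h : i < n then
    if h0 : i = 0 then ⟨1, fun j => if j = ⟨0, by omega⟩ then 1 else 0⟩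
    else ⟨Equiv.swap ⟨i - 1, by omega⟩ ⟨i, h⟩, 0⟩
  else 1

/-- `t i = s i * s (i-1) * ⋯ * s 1 * s 0`. -/
def t (i : ℕ) : GenPerm m n := ((List.range (i + 1)).map (fun j => (s (i - j) : GenPerm m n))).prod

/-- `rep k = t (n-1) ^ k (n-1) * ⋯ * t 0 ^ k 0`. -/
def rep (k : Fin n → ℕ) : GenPerm m n :=
  (List.ofFn (fun i : Fin n => (t (i : ℕ) : GenPerm m n) ^ k i)).reverse.prod

open scoped Classical in
/-- The flag major index: the sum of the exponents in the canonical representation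
`π = t (n-1) ^ k (n-1) * ⋯ * t 0 ^ k 0` with `0 ≤ k i < m * (i+1)`. -/
noncomputable def flagMajor (π : GenPerm m n) : ℕ :=
  if h : ∃ k : Fin n → ℕ, (∀ i : Fin n, k i < m * ((i : ℕ) + 1)) ∧ π = rep k
  then ∑ i, h.choose i else 0

/-- The major index of a generalized permutation with respect to the linear order
`1·ω^{m-1} < ⋯ < n·ω^{m-1} < ⋯ < 1·ω < ⋯ < n·ω < 1 < ⋯ < n`
(a 1-indexed descent at position `i` contributes `i`). -/
def majG (π : GenPerm m n) : ℕ :=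
  ∑ i ∈ Finset.range n, if h : i + 1 < n then
    (if (π.c ⟨i, by omega⟩).val < (π.c ⟨i + 1, h⟩).val ∨
        (π.c ⟨i, by omega⟩ = π.c ⟨i + 1, h⟩ ∧ π.σ ⟨i + 1, h⟩ < π.σ ⟨i, by omega⟩)
     then i + 1 else 0) else 0

/-- Coxeter length with respect to the generators `s 0, s 1, …, s (n-1)`. -/
noncomputable def len (π : GenPerm m n) : ℕ :=
  sInf {l | ∃ w : List (Fin n), w.length = l ∧ (w.map (fun i => (s (i : ℕ) : GenPerm m n))).prod = π}


/-- The number of negative entries of a signed permutation. -/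
def kneg {n : ℕ} (σ : GenPerm 2 n) : ℕ :=
  (Finset.univ.filter (fun i : Fin n => σ.c i = 1)).card

lemma perm_inv_apply_self' {α : Type*} (f : Equiv.Perm α) (x : α) : f⁻¹ (f x) = x :=
  f.symm_apply_apply x

lemma t_succ {m n : ℕ} (i : ℕ) : (t (i+1) : GenPerm m n) = s (i+1) * t i := by
  unfold t
  rw [List.range_succ_eq_map]
  simp only [List.map_cons, List.map_map, List.prod_cons]
  congr 2
  ext j
  simp [Function.comp]

lemma t_zero {m n : ℕ} : (t 0 : GenPerm m n) = s 0 := by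
  unfold t
  simp

lemma s_zero_σ {m n : ℕ} (j : Fin n) : ((s 0 : GenPerm m n).σ j) = j := by
  unfold s
  split_ifs with h h0 <;> simp_all

lemma s_zero_c {m n : ℕ} (hn : 0 < n) (j : Fin n) :
    ((s 0 : GenPerm m n).c j) = if (j : ℕ) = 0 then 1 else 0 := by
  unfold s
  rw [dif_pos hn, dif_pos rfl]
  simp only
  congr 1
  simp [Fin.ext_iff]
lemma s_pos_σ {m n : ℕ} {i : ℕ} (h0 : 0 < i) (h : i < n) (j : Fin n) :
    (((s i : GenPerm m n).σ j) : ℕ) =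
      if (j : ℕ) = i - 1 then i else if (j : ℕ) = i then i - 1 else j := by
  unfold s
  rw [dif_pos h, dif_neg (by omega)]
  simp only
  rcases eq_or_ne j ⟨i-1, by omega⟩ with rfl | h1
  · simp [Equiv.swap_apply_left]
  · rcases eq_or_ne j ⟨i, h⟩ with rfl | h2
    · rw [Equiv.swap_apply_right]
      simp [Fin.ext_iff] at h1 ⊢
      intro; omega
    · rw [Equiv.swap_apply_of_ne_of_ne h1 h2]
      simp [Fin.ext_iff] at h1 h2
      rw [if_neg h1, if_neg h2]

lemma s_pos_c {m n : ℕ} {i : ℕ} (h0 : 0 < i) (h : i < n) (j : Fin n) :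
    ((s i : GenPerm m n).c j) = 0 := by
  unfold s
  rw [dif_pos h, dif_neg (by omega)]
  rfl

lemma t_σ {m n : ℕ} {i : ℕ} (hi : i < n) (j : Fin n) :
    (((t i : GenPerm m n).σ j) : ℕ) =
      if (j : ℕ) = 0 then i else if (j : ℕ) ≤ i then (j : ℕ) - 1 else j := by
  induction i with
  | zero =>
    rw [t_zero, s_zero_σ]
    split_ifs <;> omega
  | succ i ih =>
    rw [t_succ]
    simp only [mul_σ, Equiv.Perm.mul_apply]
    have h1 := ih (show i < n by omega)
    by_cases h0 : (j : ℕ) = 0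
    · rw [if_pos h0] at h1
      rw [s_pos_σ (by omega) hi, h1]
      split_ifs <;> omega
    · rw [if_neg h0] at h1
      by_cases h2 : (j : ℕ) ≤ i
      · rw [if_pos h2] at h1
        rw [s_pos_σ (by omega) hi, h1]
        split_ifs <;> omega
      · rw [if_neg h2] at h1
        rw [s_pos_σ (by omega) hi, h1]
        split_ifs <;> omega

lemma t_c {m n : ℕ} {i : ℕ} (hi : i < n) (j : Fin n) :
    ((t i : GenPerm m n).c j) = if (j : ℕ) = 0 then 1 else 0 := by
  induction i with
  | zero =>
    rw [t_zero, s_zero_c (by omega)]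
  | succ i ih =>
    rw [t_succ]
    simp only [mul_c]
    rw [s_pos_c (by omega) hi, ih (by omega), zero_add]
lemma tpow_σ_high {n : ℕ} {i k : ℕ} (hi : i < n) (j : Fin n) (hj : i < (j : ℕ)) :
    ((t i : GenPerm 2 n) ^ k).σ j = j := by
  induction k with
  | zero => simp
  | succ k ih =>
    rw [pow_succ', mul_σ, Equiv.Perm.mul_apply, ih]
    have := t_σ (m := 2) hi j
    rw [if_neg (by omega), if_neg (by omega)] at this
    exact Fin.ext this

lemma tpow_c_high {n : ℕ} {i k : ℕ} (hi : i < n) (j : Fin n) (hj : i < (j : ℕ)) :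
    ((t i : GenPerm 2 n) ^ k).c j = 0 := by
  induction k with
  | zero => simp
  | succ k ih =>
    rw [pow_succ', mul_c, tpow_σ_high hi j hj, t_c hi, if_neg (by omega), zero_add, ih]

lemma tpow_last {n : ℕ} {i k : ℕ} (hi : i < n) (hk : k < 2 * (i + 1)) :
    ((((t i : GenPerm 2 n) ^ k).σ ⟨i, hi⟩ : ℕ) = if k ≤ i then i - k else 2 * i + 1 - k)
      ∧ (((t i : GenPerm 2 n) ^ k).c ⟨i, hi⟩ = if k ≤ i then 0 else 1) := by
  induction k with
  | zero => simp
  | succ k ih =>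
    obtain ⟨ih1, ih2⟩ := ih (by omega)
    set x := ((t i : GenPerm 2 n) ^ k).σ ⟨i, hi⟩ with hx
    have hx0 : ((x : ℕ) = 0) ↔ k = i := by
      rw [ih1]; split_ifs <;> omega
    constructor
    · rw [pow_succ', mul_σ, Equiv.Perm.mul_apply, ← hx, t_σ hi x]
      by_cases hki : k = i
      · rw [if_pos (hx0.mpr hki), if_neg (by omega)]
        omega
      · rw [if_neg (hx0.not.mpr hki)]
        by_cases h2 : k ≤ i
        · have ih1' : (x : ℕ) = i - k := by rw [ih1, if_pos h2]
          rw [ih1', if_pos (by omega), if_pos (by omega)]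
          omega
        · have ih1' : (x : ℕ) = 2 * i + 1 - k := by rw [ih1, if_neg h2]
          rw [ih1', if_pos (by omega), if_neg (by omega)]
          omega
    · rw [pow_succ', mul_c, ← hx, t_c hi x, ih2]
      by_cases hki : k = i
      · rw [if_pos (hx0.mpr hki), if_pos (by omega), if_neg (by omega)]
        decide
      · rw [if_neg (hx0.not.mpr hki)]
        by_cases h2 : k ≤ i
        · rw [if_pos h2, if_pos (by omega)]
          decide
        · rw [if_neg h2, if_neg (by omega)]
          decide
/-- `σ` acts trivially on positions `≥ m`. -/
def Red {n : ℕ} (m : ℕ) (σ : GenPerm 2 n) : Prop :=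
  ∀ j : Fin n, m ≤ (j : ℕ) → σ.σ j = j ∧ σ.c j = 0

lemma red_mono {n m m' : ℕ} {σ : GenPerm 2 n} (h : Red m σ) (hm : m ≤ m') : Red m' σ :=
  fun j hj => h j (le_trans hm hj)

lemma red_one {n m : ℕ} : Red m (1 : GenPerm 2 n) := fun j _ => ⟨rfl, rfl⟩

lemma red_lt {n m : ℕ} {σ : GenPerm 2 n} (h : Red m σ) {j : Fin n} (hj : (j : ℕ) < m) :
    (σ.σ j : ℕ) < m := by
  by_contra hge
  have h2 := (h (σ.σ j) (by omega)).1
  have := σ.σ.injective h2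
  omega

lemma zmod2_cases : ∀ x : ZMod 2, x = 0 ∨ x = 1 := by decide

/-- the rank of the letter at position `j`, in the order `-1 < -2 < ⋯ < -m < 1 < ⋯`. -/
def rnk {n : ℕ} (m : ℕ) (σ : GenPerm 2 n) (j : Fin n) : ℕ :=
  if σ.c j = 1 then (σ.σ j : ℕ) else m + (σ.σ j : ℕ)

lemma majG_rnk {n m : ℕ} {σ : GenPerm 2 n} (h : Red m σ) :
    majG σ = ∑ i ∈ Finset.range n,
      if hh : i + 1 < n then
        (if rnk m σ ⟨i + 1, hh⟩ < rnk m σ ⟨i, by omega⟩ then i + 1 else 0)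
      else 0 := by
  unfold majG
  refine Finset.sum_congr rfl fun i _ => ?_
  by_cases hh : i + 1 < n
  · rw [dif_pos hh, dif_pos hh]
    refine if_congr ?_ rfl rfl
    set j1 : Fin n := ⟨i, by omega⟩
    set j2 : Fin n := ⟨i + 1, hh⟩
    have hv1 : σ.c j1 = 1 → (σ.σ j1 : ℕ) < m := by
      intro hc
      by_cases hj : (j1 : ℕ) < m
      · exact red_lt h hj
      · exact absurd (h j1 (by omega)).2 (by rw [hc]; decide)
    have hv2 : σ.c j2 = 1 → (σ.σ j2 : ℕ) < m := by
      intro hc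
      by_cases hj : (j2 : ℕ) < m
      · exact red_lt h hj
      · exact absurd (h j2 (by omega)).2 (by rw [hc]; decide)
    have hlt : (σ.σ j2 < σ.σ j1) ↔ ((σ.σ j2 : ℕ) < (σ.σ j1 : ℕ)) := Iff.rfl
    unfold rnk
    rcases zmod2_cases (σ.c j1) with hc1 | hc1 <;> rcases zmod2_cases (σ.c j2) with hc2 | hc2
    · rw [hc1, hc2, if_neg (by decide), if_neg (by decide)]
      constructor
      · rintro (hlt' | ⟨-, hltσ⟩)
        · exact absurd hlt' (by decide)
        · rw [hlt] at hltσ; omega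
      · intro hl; exact Or.inr ⟨rfl, hlt.mpr (by omega)⟩
    · rw [hc1, hc2, if_pos rfl, if_neg (by decide)]
      have := hv2 hc2
      constructor
      · intro _; omega
      · intro _; exact Or.inl (by decide)
    · rw [hc1, hc2, if_neg (by decide), if_pos rfl]
      have := hv1 hc1
      constructor
      · rintro (hlt' | ⟨heq, -⟩)
        · exact absurd hlt' (by decide)
        · exact absurd heq (by decide)
      · intro hl; omega
    · rw [hc1, hc2, if_pos rfl, if_pos rfl]
      constructor
      · rintro (hlt' | ⟨-, hltσ⟩)
        · exact absurd hlt' (by decide)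
        · rw [hlt] at hltσ; omega
      · intro hl; exact Or.inr ⟨rfl, hlt.mpr (by omega)⟩
  · rw [dif_neg hh, dif_neg hh]
lemma red_mul_t {n m : ℕ} {σ : GenPerm 2 n} (hm : 1 ≤ m) (hmn : m ≤ n) (h : Red m σ) :
    Red m (t (m-1) * σ) := by
  intro j hj
  obtain ⟨h1, h2⟩ := h j hj
  constructor
  · rw [mul_σ, Equiv.Perm.mul_apply, h1]
    have := t_σ (m := 2) (show m - 1 < n by omega) j
    rw [if_neg (by omega), if_neg (by omega)] at this
    exact Fin.ext this
  · rw [mul_c, h1, h2, t_c (show m - 1 < n by omega), if_neg (by omega), zero_add]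

lemma rnk_high {n m : ℕ} {σ : GenPerm 2 n} (h : Red m σ) {j : Fin n} (hj : m ≤ (j : ℕ)) :
    rnk m σ j = m + (j : ℕ) := by
  obtain ⟨h1, h2⟩ := h j hj
  unfold rnk
  rw [h2, if_neg (by decide), h1]

lemma rnk_lt {n m : ℕ} {σ : GenPerm 2 n} (h : Red m σ) {j : Fin n} (hj : (j : ℕ) < m) :
    rnk m σ j < 2 * m := by
  have hv := red_lt h hj
  unfold rnk
  split_ifs <;> omega

lemma rnk_eq_zero_iff {n m : ℕ} {σ : GenPerm 2 n} (hm : 1 ≤ m) (h : Red m σ) (j : Fin n) :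
    rnk m σ j = 0 ↔ ((σ.σ j : ℕ) = 0 ∧ σ.c j = 1) := by
  unfold rnk
  rcases zmod2_cases (σ.c j) with hc | hc <;> rw [hc]
  · rw [if_neg (by decide)]
    constructor
    · intro hh; omega
    · rintro ⟨-, hh⟩; exact absurd hh (by decide)
  · rw [if_pos rfl]
    exact ⟨fun hh => ⟨hh, rfl⟩, fun hh => hh.1⟩

lemma rnk_eq_m_iff {n m : ℕ} {σ : GenPerm 2 n} (hm : 1 ≤ m) (h : Red m σ) (j : Fin n) :
    rnk m σ j = m ↔ ((σ.σ j : ℕ) = 0 ∧ σ.c j = 0) := by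
  unfold rnk
  rcases zmod2_cases (σ.c j) with hc | hc <;> rw [hc]
  · rw [if_neg (by decide)]
    constructor
    · intro hh; exact ⟨by omega, rfl⟩
    · rintro ⟨hh, -⟩; omega
  · rw [if_pos rfl]
    have hv : (σ.σ j : ℕ) < m := by
      by_cases hj : (j : ℕ) < m
      · exact red_lt h hj
      · exact absurd (h j (by omega)).2 (by rw [hc]; decide)
    constructor
    · intro hh; omega
    · rintro ⟨-, hh⟩; exact absurd hh (by decide)

lemma rnk_mul_t {n m : ℕ} {σ : GenPerm 2 n} (hm : 1 ≤ m) (hmn : m ≤ n) (h : Red m σ)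
    (j : Fin n) :
    rnk m (t (m-1) * σ) j =
      if (j : ℕ) < m then (if rnk m σ j = 0 then 2 * m - 1 else rnk m σ j - 1)
      else rnk m σ j := by
  have hi : m - 1 < n := by omega
  by_cases hj : (j : ℕ) < m
  · rw [if_pos hj]
    have hv : (σ.σ j : ℕ) < m := red_lt h hj
    have hσ2 : ((t (m-1) * σ).σ j : ℕ) =
        if (σ.σ j : ℕ) = 0 then m - 1 else (σ.σ j : ℕ) - 1 := by
      rw [mul_σ, Equiv.Perm.mul_apply, t_σ hi (σ.σ j)]
      split_ifs with h1 h2 h3 h4 <;> omega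
    have hc2 : (t (m-1) * σ).c j =
        (if (σ.σ j : ℕ) = 0 then 1 else 0) + σ.c j := by
      rw [mul_c, t_c hi (σ.σ j)]
    by_cases h0 : (σ.σ j : ℕ) = 0
    · rw [if_pos h0] at hσ2 hc2
      rcases zmod2_cases (σ.c j) with hc | hc
      · have hc2' : (t (m-1) * σ).c j = 1 := by rw [hc2, hc]; decide
        unfold rnk
        rw [hc2', if_pos rfl, hσ2, hc, if_neg (show ¬(0 : ZMod 2) = 1 by decide),
          if_neg (by omega)]
        omega
      · have hc2' : (t (m-1) * σ).c j = 0 := by rw [hc2, hc]; decide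
        unfold rnk
        rw [hc2', if_neg (show ¬(0 : ZMod 2) = 1 by decide), hσ2, hc, if_pos rfl, if_pos h0]
        omega
    · rw [if_neg h0] at hσ2 hc2
      rw [zero_add] at hc2
      rcases zmod2_cases (σ.c j) with hc | hc
      · have hc2' : (t (m-1) * σ).c j = 0 := by rw [hc2, hc]
        unfold rnk
        rw [hc2', if_neg (show ¬(0 : ZMod 2) = 1 by decide), hσ2, hc,
          if_neg (show ¬(0 : ZMod 2) = 1 by decide), if_neg (by omega)]
        omega
      · have hc2' : (t (m-1) * σ).c j = 1 := by rw [hc2, hc]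
        unfold rnk
        rw [hc2', if_pos rfl, hσ2, hc, if_pos rfl, if_neg h0]
  · rw [if_neg hj]
    rw [rnk_high h (by omega), rnk_high (red_mul_t hm hmn h) (by omega)]
lemma rnk_pair_iff {n m : ℕ} (hm : 1 ≤ m) (hmn : m ≤ n) {σ : GenPerm 2 n} (h : Red m σ)
    {i : ℕ} (hh : i + 1 < n)
    (h1 : rnk m σ ⟨i, by omega⟩ ≠ 0) (h2 : rnk m σ ⟨i + 1, hh⟩ ≠ 0) :
    (rnk m (t (m-1) * σ) ⟨i + 1, hh⟩ < rnk m (t (m-1) * σ) ⟨i, by omega⟩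
      ↔ rnk m σ ⟨i + 1, hh⟩ < rnk m σ ⟨i, by omega⟩) := by
  rw [rnk_mul_t hm hmn h, rnk_mul_t hm hmn h]
  by_cases hj2 : i + 1 < m
  · rw [if_pos (show ((⟨i + 1, hh⟩ : Fin n) : ℕ) < m from hj2), if_neg h2,
      if_pos (show ((⟨i, by omega⟩ : Fin n) : ℕ) < m by simp; omega), if_neg h1]
    have b1 : rnk m σ ⟨i, by omega⟩ < 2 * m := rnk_lt h (by simp; omega)
    have b2 : rnk m σ ⟨i + 1, hh⟩ < 2 * m := rnk_lt h (by simp; omega)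
    omega
  · by_cases hj1 : i < m
    · rw [if_neg (show ¬((⟨i + 1, hh⟩ : Fin n) : ℕ) < m from hj2),
        if_pos (show ((⟨i, by omega⟩ : Fin n) : ℕ) < m from hj1), if_neg h1]
      have hr2 : rnk m σ ⟨i + 1, hh⟩ = m + (i + 1) := rnk_high h (by simp; omega)
      have b1 : rnk m σ ⟨i, by omega⟩ < 2 * m := rnk_lt h hj1
      omega
    · rw [if_neg (show ¬((⟨i + 1, hh⟩ : Fin n) : ℕ) < m from hj2),
        if_neg (show ¬((⟨i, by omega⟩ : Fin n) : ℕ) < m from hj1)]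
lemma step {n m : ℕ} (hm : 1 ≤ m) (hmn : m ≤ n) {σ : GenPerm 2 n} (h : Red m σ)
    (hbad : ¬(((σ.σ ⟨m - 1, by omega⟩ : ℕ) = 0) ∧ σ.c ⟨m - 1, by omega⟩ = 1)) :
    2 * majG (t (m - 1) * σ) + kneg (t (m - 1) * σ) = 2 * majG σ + kneg σ + 1 := by
  have hn : 0 < n := by omega
  have h2 : Red m (t (m-1) * σ) := red_mul_t hm hmn h
  set p : Fin n := σ.σ.symm ⟨0, hn⟩ with hpdef
  have hp : σ.σ p = ⟨0, hn⟩ := σ.σ.apply_symm_apply _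
  have hpm : (p : ℕ) < m := by
    by_contra hge
    have h3 := (h p (by omega)).1
    rw [hp] at h3
    have : (p : ℕ) = 0 := by rw [← h3]
    omega
  have huniq : ∀ j : Fin n, ((σ.σ j : ℕ) = 0 ↔ j = p) := by
    intro j
    constructor
    · intro hz
      have hj : σ.σ j = ⟨0, hn⟩ := Fin.ext hz
      apply σ.σ.injective
      rw [hj, hp]
    · rintro rfl
      rw [hp]
  have hcσ2 : ∀ j : Fin n, (t (m-1) * σ).c j = (if j = p then 1 else 0) + σ.c j := by
    intro j
    rw [mul_c, t_c (show m - 1 < n by omega)]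
    congr 1
    exact if_congr (huniq j) rfl rfl
  rcases zmod2_cases (σ.c p) with hcp | hcp
  · -- Case A : letter at the 0-value position is positive
    have hnz : ∀ j : Fin n, rnk m σ j ≠ 0 := by
      intro j hz
      rw [rnk_eq_zero_iff hm h, huniq j] at hz
      obtain ⟨rfl, hc1⟩ := hz
      rw [hcp] at hc1
      exact absurd hc1 (by decide)
    have hmaj : majG (t (m-1) * σ) = majG σ := by
      rw [majG_rnk h2, majG_rnk h]
      refine Finset.sum_congr rfl fun i hi => ?_
      by_cases hh : i + 1 < n
      · rw [dif_pos hh, dif_pos hh]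
        exact if_congr (rnk_pair_iff hm hmn h hh (hnz _) (hnz _)) rfl rfl
      · rw [dif_neg hh, dif_neg hh]
    have hkneg : kneg (t (m-1) * σ) = kneg σ + 1 := by
      unfold kneg
      have hset : Finset.univ.filter (fun j : Fin n => (t (m-1) * σ).c j = 1)
          = insert p (Finset.univ.filter (fun j : Fin n => σ.c j = 1)) := by
        ext j
        simp only [Finset.mem_filter, Finset.mem_insert, Finset.mem_univ, true_and]
        rw [hcσ2 j]
        rcases eq_or_ne j p with rfl | hne
        · rw [if_pos rfl, hcp]
          exact ⟨fun _ => Or.inl rfl, fun _ => by decide⟩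
        · rw [if_neg hne, zero_add]
          constructor
          · exact fun hcj => Or.inr hcj
          · rintro (rfl | hcj)
            · exact absurd rfl hne
            · exact hcj
      rw [hset, Finset.card_insert_of_notMem]
      simp only [Finset.mem_filter, Finset.mem_univ, true_and]
      rw [hcp]
      decide
    omega
  · -- Case B : letter at the 0-value position is negative
    have hpm1 : (p : ℕ) + 1 < m := by
      by_contra hge
      have hpe : p = ⟨m - 1, by omega⟩ := Fin.ext (by simp only [Fin.val_mk]; omega)
      refine hbad ⟨?_, ?_⟩
      · rw [← hpe, hp]
      · rw [← hpe]
        exact hcp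
    have hrp0 : rnk m σ p = 0 := by
      unfold rnk
      rw [hcp, if_pos rfl, hp]
    have hnz : ∀ j : Fin n, j ≠ p → rnk m σ j ≠ 0 := fun j hne hz =>
      hne ((huniq j).mp ((rnk_eq_zero_iff hm h j).mp hz).1)
    have hrp2 : rnk m (t (m-1) * σ) p = 2 * m - 1 := by
      rw [rnk_mul_t hm hmn h p, if_pos hpm, if_pos hrp0]
    have hkneg : kneg σ = kneg (t (m-1) * σ) + 1 := by
      unfold kneg
      have hset : Finset.univ.filter (fun j : Fin n => (t (m-1) * σ).c j = 1)
          = (Finset.univ.filter (fun j : Fin n => σ.c j = 1)).erase p := by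
        ext j
        simp only [Finset.mem_filter, Finset.mem_erase, Finset.mem_univ, true_and]
        rw [hcσ2 j]
        rcases eq_or_ne j p with rfl | hne
        · rw [if_pos rfl, hcp]
          constructor
          · intro h'
            exact absurd h' (by decide)
          · rintro ⟨hne', -⟩
            exact absurd rfl hne'
        · rw [if_neg hne, zero_add]
          exact ⟨fun hcj => ⟨hne, hcj⟩, fun hcj => hcj.2⟩
      rw [hset]
      exact (Finset.card_erase_add_one (by
        simp only [Finset.mem_filter, Finset.mem_univ, true_and]
        exact hcp)).symm
    have hmaj : majG (t (m-1) * σ) = majG σ + 1 := by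
      rw [majG_rnk h2, majG_rnk h]
      have key : ∀ i ∈ Finset.range n,
          (if hh : i + 1 < n then
            (if rnk m (t (m-1) * σ) ⟨i + 1, hh⟩ < rnk m (t (m-1) * σ) ⟨i, by omega⟩
              then i + 1 else 0) else 0)
            + (if i = (p : ℕ) - 1 then (if 1 ≤ (p : ℕ) then (p : ℕ) else 0) else 0)
          = (if hh : i + 1 < n then
              (if rnk m σ ⟨i + 1, hh⟩ < rnk m σ ⟨i, by omega⟩ then i + 1 else 0) else 0)
            + (if i = (p : ℕ) then i + 1 else 0) := by
        intro i hi
        by_cases hh : i + 1 < n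
        · rw [dif_pos hh, dif_pos hh]
          rcases eq_or_ne i (p : ℕ) with rfl | hip
          · have hA : (if (p : ℕ) = (p : ℕ) - 1 then (if 1 ≤ (p : ℕ) then (p : ℕ) else 0) else 0)
                = 0 := by
              split_ifs <;> omega
            rw [hA, if_pos rfl]
            have he1 : (⟨(p : ℕ), by omega⟩ : Fin n) = p := Fin.ext rfl
            rw [he1]
            have hj2 : ((⟨(p : ℕ) + 1, hh⟩ : Fin n) : ℕ) < m := hpm1
            have hne2 : (⟨(p : ℕ) + 1, hh⟩ : Fin n) ≠ p := by
              intro he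
              have := congrArg Fin.val he
              simp at this
            have hb2 : rnk m σ ⟨(p : ℕ) + 1, hh⟩ < 2 * m := rnk_lt h hj2
            have hn2 : rnk m σ ⟨(p : ℕ) + 1, hh⟩ ≠ 0 := hnz _ hne2
            rw [rnk_mul_t hm hmn h, if_pos hj2, if_neg hn2, hrp2]
            rw [if_pos (by omega), if_neg (by omega)]
            omega
          · by_cases hip1 : i = (p : ℕ) - 1
            · have h1p : 1 ≤ (p : ℕ) := by omega
              rw [if_pos hip1, if_pos h1p, if_neg hip]
              have he2 : (⟨i + 1, hh⟩ : Fin n) = p := Fin.ext (by simp; omega)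
              rw [he2, hrp2, hrp0]
              have hne1 : (⟨i, by omega⟩ : Fin n) ≠ p := by
                intro he
                have := congrArg Fin.val he
                simp at this
                omega
              have hn1 : rnk m σ ⟨i, by omega⟩ ≠ 0 := hnz _ hne1
              have hj1 : ((⟨i, by omega⟩ : Fin n) : ℕ) < m := by simp; omega
              have hb1 : rnk m σ ⟨i, by omega⟩ < 2 * m := rnk_lt h hj1
              rw [rnk_mul_t hm hmn h, if_pos hj1, if_neg hn1]
              rw [if_neg (by omega), if_pos (by omega)]
              omega
            · rw [if_neg hip1, if_neg hip, add_zero, add_zero]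
              have hne1 : (⟨i, by omega⟩ : Fin n) ≠ p := by
                intro he
                exact hip (by rw [← he])
              have hne2 : (⟨i + 1, hh⟩ : Fin n) ≠ p := by
                intro he
                have := congrArg Fin.val he
                simp at this
                omega
              exact if_congr (rnk_pair_iff hm hmn h hh (hnz _ hne1) (hnz _ hne2)) rfl rfl
        · rw [dif_neg hh, dif_neg hh, if_neg (by omega), if_neg (by omega)]
      have hsum := Finset.sum_congr rfl key
      rw [Finset.sum_add_distrib, Finset.sum_add_distrib] at hsum
      rw [Finset.sum_ite_eq' (Finset.range n) ((p : ℕ) - 1)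
        (fun _ => if 1 ≤ (p : ℕ) then (p : ℕ) else 0),
        Finset.sum_ite_eq' (Finset.range n) (p : ℕ) (fun i => i + 1)] at hsum
      rw [if_pos (Finset.mem_range.mpr (by omega)), if_pos (Finset.mem_range.mpr (by omega))]
        at hsum
      by_cases h1p : 1 ≤ (p : ℕ)
      · rw [if_pos h1p] at hsum
        omega
      · rw [if_neg h1p] at hsum
        omega
    omega
lemma red_tpow_mul {n m : ℕ} (hm : 1 ≤ m) (hmn : m ≤ n) {σ : GenPerm 2 n} (h : Red m σ)
    (κ : ℕ) : Red m ((t (m-1))^κ * σ) := by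
  induction κ with
  | zero => rw [pow_zero, one_mul]; exact h
  | succ κ ih =>
    rw [pow_succ', mul_assoc]
    exact red_mul_t hm hmn ih

lemma iter {n m : ℕ} (hm : 1 ≤ m) (hmn : m ≤ n) {σ : GenPerm 2 n} (h : Red (m-1) σ)
    {κ : ℕ} (hκ : κ < 2 * m) :
    2 * majG ((t (m-1))^κ * σ) + kneg ((t (m-1))^κ * σ) = 2 * majG σ + kneg σ + κ := by
  induction κ with
  | zero => rw [pow_zero, one_mul, add_zero]
  | succ κ ih =>
    have hi : m - 1 < n := by omega
    have hκ' : κ < 2 * ((m-1) + 1) := by omega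
    have hred : Red m ((t (m-1))^κ * σ) :=
      red_tpow_mul hm hmn (red_mono h (by omega)) κ
    have hσm : ((t (m-1))^κ * σ).σ ⟨m - 1, hi⟩ = ((t (m-1) : GenPerm 2 n)^κ).σ ⟨m - 1, hi⟩ := by
      rw [mul_σ, Equiv.Perm.mul_apply, (h ⟨m - 1, hi⟩ (by simp)).1]
    have hcm : ((t (m-1))^κ * σ).c ⟨m - 1, hi⟩ = ((t (m-1) : GenPerm 2 n)^κ).c ⟨m - 1, hi⟩ := by
      rw [mul_c, (h ⟨m - 1, hi⟩ (by simp)).1, (h ⟨m - 1, hi⟩ (by simp)).2, add_zero]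
    obtain ⟨hts, htc⟩ := tpow_last (i := m - 1) (k := κ) hi hκ'
    have hbad : ¬(((((t (m-1))^κ * σ).σ ⟨m - 1, by omega⟩ : ℕ) = 0)
        ∧ ((t (m-1))^κ * σ).c ⟨m - 1, by omega⟩ = 1) := by
      rintro ⟨hb1, hb2⟩
      rw [hσm, hts] at hb1
      rw [hcm, htc] at hb2
      by_cases hc : κ ≤ m - 1
      · rw [if_pos hc] at hb2
        exact absurd hb2 (by decide)
      · rw [if_neg hc] at hb1
        omega
    have hs := step hm hmn hred hbad
    rw [pow_succ', mul_assoc]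
    rw [hs, ih (by omega)]
    omega
/-- Partial products of the canonical form. -/
def Q {n : ℕ} (e : ℕ → ℕ) : ℕ → GenPerm 2 n
  | 0 => 1
  | m + 1 => t m ^ e m * Q e m

lemma Q_red {n : ℕ} (e : ℕ → ℕ) : ∀ m : ℕ, m ≤ n → Red m (Q (n := n) e m) := by
  intro m
  induction m with
  | zero => exact fun _ => red_one
  | succ m ih =>
    intro hmn j hj
    have hm : m < n := by omega
    have hq := ih (by omega) j (by omega)
    constructor
    · rw [Q, mul_σ, Equiv.Perm.mul_apply, hq.1, tpow_σ_high hm j (by omega)]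
    · rw [Q, mul_c, hq.1, tpow_c_high hm j (by omega), hq.2, add_zero]

lemma majG_one {n : ℕ} : majG (1 : GenPerm 2 n) = 0 := by
  unfold majG
  refine Finset.sum_eq_zero fun i _ => ?_
  by_cases hh : i + 1 < n
  · rw [dif_pos hh, if_neg]
    rintro (hlt | ⟨-, hlt⟩)
    · simp at hlt
    · simp only [one_σ, Equiv.Perm.one_apply, Fin.mk_lt_mk] at hlt
      omega
  · rw [dif_neg hh]

lemma kneg_one {n : ℕ} : kneg (1 : GenPerm 2 n) = 0 := by
  unfold kneg
  rw [Finset.card_eq_zero]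
  refine Finset.filter_eq_empty_iff.mpr fun _ _ => ?_
  simp only [one_c]
  decide

lemma B_Q {n : ℕ} (e : ℕ → ℕ) : ∀ m : ℕ, m ≤ n → (∀ i < m, e i < 2 * (i + 1)) →
    2 * majG (Q (n := n) e m) + kneg (Q (n := n) e m) = ∑ i ∈ Finset.range m, e i := by
  intro m
  induction m with
  | zero => intro _ _; rw [Q, majG_one, kneg_one]; simp
  | succ m ih =>
    intro hmn hb
    have key := iter (m := m + 1) (by omega) hmn
      (σ := Q (n := n) e m) (by simpa using Q_red e m (by omega))
      (κ := e m) (by simpa using hb m (by omega))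
    simp only [Nat.add_sub_cancel] at key
    rw [Q, key, ih (by omega) (fun i hi => hb i (by omega)), Finset.sum_range_succ]
lemma Q_congr {n : ℕ} {e e' : ℕ → ℕ} : ∀ m : ℕ, (∀ i < m, e i = e' i) →
    Q (n := n) e m = Q (n := n) e' m := by
  intro m
  induction m with
  | zero => intro _; rfl
  | succ m ih =>
    intro hag
    rw [Q, Q, hag m (by omega), ih (fun i hi => hag i (by omega))]

lemma exists_Q {n : ℕ} : ∀ m : ℕ, m ≤ n → ∀ σ : GenPerm 2 n, Red m σ →
    ∃ e : ℕ → ℕ, (∀ i < m, e i < 2 * (i + 1)) ∧ σ = Q (n := n) e m := by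
  intro m
  induction m with
  | zero =>
    intro _ σ h
    refine ⟨fun _ => 0, fun i hi => by omega, ?_⟩
    ext j
    · exact congrArg Fin.val ((h j (by omega)).1)
    · exact (h j (by omega)).2
  | succ m ih =>
    intro hmn σ h
    have hm : m < n := by omega
    have hval : (σ.σ ⟨m, hm⟩ : ℕ) < m + 1 := red_lt h (by simp)
    set κ : ℕ := if σ.c ⟨m, hm⟩ = 0 then m - (σ.σ ⟨m, hm⟩ : ℕ)
      else 2 * m + 1 - (σ.σ ⟨m, hm⟩ : ℕ) with hκdef
    have hκb : κ < 2 * (m + 1) := by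
      rw [hκdef]; split_ifs <;> omega
    obtain ⟨hts, htc⟩ := tpow_last (i := m) (k := κ) hm (by omega)
    have hκsplit : (σ.c ⟨m, hm⟩ = 0 ∧ κ = m - (σ.σ ⟨m, hm⟩ : ℕ) ∧ κ ≤ m)
        ∨ (σ.c ⟨m, hm⟩ = 1 ∧ κ = 2 * m + 1 - (σ.σ ⟨m, hm⟩ : ℕ) ∧ ¬ κ ≤ m) := by
      rcases zmod2_cases (σ.c ⟨m, hm⟩) with hc | hc
      · refine Or.inl ⟨hc, ?_, ?_⟩ <;> rw [hκdef, if_pos hc] <;> omega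
      · have hc0 : ¬ σ.c ⟨m, hm⟩ = 0 := by rw [hc]; decide
        refine Or.inr ⟨hc, ?_, ?_⟩ <;> rw [hκdef, if_neg hc0] <;> omega
    have htσ : ((t m : GenPerm 2 n) ^ κ).σ ⟨m, hm⟩ = σ.σ ⟨m, hm⟩ := by
      apply Fin.ext
      rcases hκsplit with ⟨hc, hκv, hκm⟩ | ⟨hc, hκv, hκm⟩
      · rw [hts, if_pos hκm]; omega
      · rw [hts, if_neg hκm]; omega
    have htc' : ((t m : GenPerm 2 n) ^ κ).c ⟨m, hm⟩ = σ.c ⟨m, hm⟩ := by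
      rcases hκsplit with ⟨hc, hκv, hκm⟩ | ⟨hc, hκv, hκm⟩
      · rw [htc, if_pos hκm, hc]
      · rw [htc, if_neg hκm, hc]
    set σ' : GenPerm 2 n := ((t m : GenPerm 2 n) ^ κ)⁻¹ * σ with hσ'def
    have hfix : ∀ j : Fin n, m < (j : ℕ) → ((t m : GenPerm 2 n) ^ κ).σ⁻¹ j = j := by
      intro j hj
      rw [Equiv.Perm.inv_eq_iff_eq, tpow_σ_high hm j hj]
    have hred' : Red m σ' := by
      intro j hj
      rcases eq_or_lt_of_le hj with hj' | hj'
      · have hjm : j = ⟨m, hm⟩ := Fin.ext (by simp only [Fin.val_mk]; omega)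
        subst hjm
        constructor
        · show (((t m : GenPerm 2 n) ^ κ)⁻¹ * σ).σ _ = _
          rw [mul_σ, Equiv.Perm.mul_apply, inv_σ, ← htσ, perm_inv_apply_self']
        · show (((t m : GenPerm 2 n) ^ κ)⁻¹ * σ).c _ = _
          rw [mul_c, inv_c, ← htσ, perm_inv_apply_self', htc', neg_add_cancel]
      · obtain ⟨hσj, hcj⟩ := h j (by omega)
        constructor
        · show (((t m : GenPerm 2 n) ^ κ)⁻¹ * σ).σ _ = _
          rw [mul_σ, Equiv.Perm.mul_apply, inv_σ, hσj, hfix j hj']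
        · show (((t m : GenPerm 2 n) ^ κ)⁻¹ * σ).c _ = _
          rw [mul_c, inv_c, hσj, hfix j hj', tpow_c_high hm j hj', neg_zero, zero_add, hcj]
    obtain ⟨e', hb', he'⟩ := ih (by omega) σ' hred'
    refine ⟨fun i => if i = m then κ else e' i, ?_, ?_⟩
    · intro i hi
      show (if i = m then κ else e' i) < 2 * (i + 1)
      rcases eq_or_ne i m with rfl | hne
      · rw [if_pos rfl]; exact hκb
      · rw [if_neg hne]; exact hb' i (by omega)
    · have hQm : Q (n := n) (fun i => if i = m then κ else e' i) m = Q (n := n) e' m :=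
        Q_congr m (fun i hi => if_neg (by omega))
      show σ = t m ^ (if m = m then κ else e' m)
        * Q (n := n) (fun i => if i = m then κ else e' i) m
      rw [if_pos rfl, hQm, ← he', hσ'def, mul_inv_cancel_left]

lemma Q_inj {n : ℕ} : ∀ m : ℕ, m ≤ n → ∀ e e' : ℕ → ℕ, (∀ i < m, e i < 2 * (i + 1)) →
    (∀ i < m, e' i < 2 * (i + 1)) → Q (n := n) e m = Q (n := n) e' m →
    ∀ i < m, e i = e' i := by
  intro m
  induction m with
  | zero => intro _ _ _ _ _ _ i hi; omega
  | succ m ih =>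
    intro hmn e e' hb hb' heq
    have hm : m < n := by omega
    have hσe : ∀ f : ℕ → ℕ, (Q (n := n) f (m+1)).σ ⟨m, hm⟩
        = ((t m : GenPerm 2 n) ^ f m).σ ⟨m, hm⟩ := by
      intro f
      rw [Q, mul_σ, Equiv.Perm.mul_apply, (Q_red f m (by omega) ⟨m, hm⟩ (by simp)).1]
    have hce : ∀ f : ℕ → ℕ, (Q (n := n) f (m+1)).c ⟨m, hm⟩
        = ((t m : GenPerm 2 n) ^ f m).c ⟨m, hm⟩ := by
      intro f
      rw [Q, mul_c, (Q_red f m (by omega) ⟨m, hm⟩ (by simp)).1,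
        (Q_red f m (by omega) ⟨m, hm⟩ (by simp)).2, add_zero]
    have h1 : ((t m : GenPerm 2 n) ^ e m).σ ⟨m, hm⟩ = ((t m : GenPerm 2 n) ^ e' m).σ ⟨m, hm⟩ := by
      rw [← hσe, ← hσe, heq]
    have h2 : ((t m : GenPerm 2 n) ^ e m).c ⟨m, hm⟩ = ((t m : GenPerm 2 n) ^ e' m).c ⟨m, hm⟩ := by
      rw [← hce, ← hce, heq]
    obtain ⟨hts, htc⟩ := tpow_last (i := m) (k := e m) hm (by simpa using hb m (by omega))
    obtain ⟨hts', htc'⟩ := tpow_last (i := m) (k := e' m) hm (by simpa using hb' m (by omega))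
    have hem : e m = e' m := by
      have hv := congrArg Fin.val h1
      rw [hts, hts'] at hv
      rw [htc, htc'] at h2
      by_cases hc1 : e m ≤ m <;> by_cases hc2 : e' m ≤ m
      · rw [if_pos hc1, if_pos hc2] at hv; omega
      · rw [if_pos hc1, if_neg hc2] at h2; exact absurd h2 (by decide)
      · rw [if_neg hc1, if_pos hc2] at h2; exact absurd h2 (by decide)
      · rw [if_neg hc1, if_neg hc2] at hv
        have := hb m (by omega)
        have := hb' m (by omega)
        omega
    have hQ : Q (n := n) e m = Q (n := n) e' m := by
      rw [Q, Q, hem] at heq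
      exact mul_left_cancel heq
    intro i hi
    rcases eq_or_ne i m with rfl | hne
    · exact hem
    · exact ih (by omega) e e' (fun i hi => hb i (by omega)) (fun i hi => hb' i (by omega)) hQ
        i (by omega)
lemma ofFn_t_prod {n : ℕ} (e : ℕ → ℕ) : ∀ N : ℕ,
    ((List.ofFn (fun i : Fin N => (t (i : ℕ) : GenPerm 2 n) ^ e (i : ℕ))).reverse).prod
      = Q (n := n) e N := by
  intro N
  induction N with
  | zero => simp [Q]
  | succ N ih =>
    rw [List.ofFn_succ', List.concat_eq_append, List.reverse_append, List.reverse_singleton,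
      List.singleton_append, List.prod_cons, Fin.val_last, Q]
    simp only [Fin.coe_castSucc]
    rw [ih]

lemma rep_eq_Q {n : ℕ} (k : Fin n → ℕ) :
    (rep k : GenPerm 2 n) = Q (n := n) (fun i => if h : i < n then k ⟨i, h⟩ else 0) n := by
  rw [← ofFn_t_prod (fun i => if h : i < n then k ⟨i, h⟩ else 0) n]
  unfold rep
  have hfn : (List.ofFn fun i : Fin n => (t (i : ℕ) : GenPerm 2 n) ^ k i)
      = List.ofFn fun i : Fin n =>
          (t (i : ℕ) : GenPerm 2 n) ^ (if h : (i : ℕ) < n then k ⟨(i : ℕ), h⟩ else 0) := by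
    refine congrArg _ (funext fun i => ?_)
    rw [dif_pos i.isLt]
  rw [hfn]

lemma red_top {n : ℕ} (σ : GenPerm 2 n) : Red n σ :=
  fun j hj => absurd j.isLt (by omega)

lemma flagMajor_eq_majG {n : ℕ} (σ : GenPerm 2 n) :
    flagMajor σ = 2 * majG σ + kneg σ := by
  obtain ⟨e, hb, he⟩ := exists_Q n le_rfl σ (red_top σ)
  set k : Fin n → ℕ := fun i => e (i : ℕ) with hk
  have hbk : ∀ i : Fin n, k i < 2 * ((i : ℕ) + 1) := fun i => hb (i : ℕ) i.isLt
  have hrep : σ = rep k := by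
    rw [rep_eq_Q, he]
    exact Q_congr n fun i hi => by rw [dif_pos hi]
  have hex : ∃ k' : Fin n → ℕ, (∀ i : Fin n, k' i < 2 * ((i : ℕ) + 1)) ∧ σ = rep k' :=
    ⟨k, hbk, hrep⟩
  unfold flagMajor
  rw [dif_pos hex]
  obtain ⟨hb', he'⟩ := hex.choose_spec
  have hQQ : Q (n := n) (fun i => if h : i < n then hex.choose ⟨i, h⟩ else 0) n
      = Q (n := n) (fun i => if h : i < n then k ⟨i, h⟩ else 0) n := by
    rw [← rep_eq_Q, ← rep_eq_Q, ← he', ← hrep]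
  have hagree := Q_inj n le_rfl _ _
    (fun i hi => by rw [dif_pos hi]; exact hb' ⟨i, hi⟩)
    (fun i hi => by rw [dif_pos hi]; exact hbk ⟨i, hi⟩) hQQ
  have hsum : ∑ i : Fin n, hex.choose i = ∑ i : Fin n, k i := by
    refine Finset.sum_congr rfl fun i _ => ?_
    have := hagree (i : ℕ) i.isLt
    rw [dif_pos i.isLt, dif_pos i.isLt] at this
    simpa using this
  rw [hsum]
  have hB := B_Q e n le_rfl hb
  rw [← he] at hB
  simp only [hk]
  rw [Fin.sum_univ_eq_sum_range (fun i => e i) n, ← hB]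

lemma kneg_inv {n : ℕ} (σ : GenPerm 2 n) : kneg σ = kneg σ⁻¹ := by
  unfold kneg
  refine Finset.card_bij' (fun j _ => σ.σ j) (fun x _ => σ.σ.symm x) ?_ ?_ ?_ ?_
  · intro j hj
    simp only [Finset.mem_filter, Finset.mem_univ, true_and] at hj ⊢
    rw [inv_c]
    rw [perm_inv_apply_self', hj]
    decide
  · intro x hx
    simp only [Finset.mem_filter, Finset.mem_univ, true_and] at hx ⊢
    rw [inv_c] at hx
    have hneg : ∀ a : ZMod 2, -a = 1 ↔ a = 1 := by decide
    show σ.c (σ.σ⁻¹ x) = 1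
    exact (hneg _).mp hx
  · intro j _
    exact σ.σ.symm_apply_apply j
  · intro x _
    exact σ.σ.apply_symm_apply x
/-- in `B_n = C_2 ≀ S_n`,
`Σ_σ q_1^{flag-major(σ)} q_2^{flag-major(σ⁻¹)} =
 Σ_σ q_1^{2·maj(σ)+k(σ)} q_2^{2·maj(σ⁻¹)+k(σ)}`,
where `maj` is taken with respect to `-1 < -2 < ⋯ < -n < 1 < 2 < ⋯ < n`
(this is the order used by `majG` for `m = 2`) and `k(σ)` is the number of
negative entries; in particular `k(σ) = k(σ⁻¹)`. -/
theorem flagMajor_sum_eq (n : ℕ) :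
    (∑ σ : GenPerm 2 n,
        (MvPolynomial.X 0 : MvPolynomial (Fin 2) ℚ) ^ flagMajor σ *
          (MvPolynomial.X 1 : MvPolynomial (Fin 2) ℚ) ^ flagMajor σ⁻¹ =
      ∑ σ : GenPerm 2 n,
        (MvPolynomial.X 0 : MvPolynomial (Fin 2) ℚ) ^ (2 * majG σ + kneg σ) *
          (MvPolynomial.X 1 : MvPolynomial (Fin 2) ℚ) ^ (2 * majG σ⁻¹ + kneg σ)) ∧
    (∀ σ : GenPerm 2 n, kneg σ = kneg σ⁻¹) := by
  constructor
  · refine Finset.sum_congr rfl fun σ _ => ?_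
    rw [flagMajor_eq_majG σ, flagMajor_eq_majG σ⁻¹, ← kneg_inv σ]
  · exact fun σ => kneg_inv σ

end GenPerm
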